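/- For any probability mass functions p, q, r on a finite type U, the square root of the Jensen–Shannon divergence satisfies the triangle inequality: √(JSD(p, q)) ≤ √(JSD(p, r)) + √(JSD(r, q)). -/

import Mathlib

open Finset

/-- A probability mass function on a finite type: nonnegative and summing to 1. -/
def IsPMF {U : Type*} [Fintype U] (p : U → ℝ) : Prop :=
  (∀ i, 0 ≤ p i) ∧ ∑ i, p i = 1

/-- Kullback–Leibler divergence (with the convention `0 * log (0 / x) = 0`,
which holds automatically in `ℝ`). -/
noncomputable def KL {U : Type*} [Fintype U] (p q : U → ℝ) : ℝ :=
  ∑ i, p i * Real.log (p i / q i)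

/-- Jensen–Shannon divergence. -/
noncomputable def JSD {U : Type*} [Fintype U] (p q : U → ℝ) : ℝ :=
  (1 / 2) * KL p (fun i => (p i + q i) / 2) + (1 / 2) * KL q (fun i => (p i + q i) / 2)

section JSDAux

open Real MeasureTheory Set intervalIntegral Filter
open scoped ENNReal Topology

set_option maxHeartbeats 1000000

noncomputable def jphi (t : ℝ) : ℝ := t * Real.log t
noncomputable def jE (x y : ℝ) : ℝ := jphi (2*x) + jphi (2*y) - 2 * jphi (x+y)
noncomputable def jF (x y u : ℝ) : ℝ := (Real.exp (-(x*u)) - Real.exp (-(y*u)))/u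
noncomputable def jL (x y : ℝ) : ℝ≥0∞ := ∫⁻ u in Ioi 0, (ENNReal.ofReal (jF x y u)) ^ (2:ℝ)




lemma jphi_two (x : ℝ) (hx : 0 ≤ x) : jphi (2*x) = 2*x*Real.log 2 + 2 * jphi x := by
  rcases eq_or_lt_of_le hx with h|h
  · simp [jphi, ← h]
  · simp only [jphi]
    rw [Real.log_mul (by norm_num) (ne_of_gt h)]
    ring

lemma jE_nonneg {x y : ℝ} (hx : 0 ≤ x) (hy : 0 ≤ y) : 0 ≤ jE x y := by
  have hc := Real.convexOn_mul_log.2 (mem_Ici.2 hx) (mem_Ici.2 hy)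
      (by norm_num : (0:ℝ) ≤ 1/2) (by norm_num : (0:ℝ) ≤ 1/2) (by norm_num)
  simp only [smul_eq_mul] at hc
  have h2 : jphi (x+y) = 2 * jphi ((x+y)/2) + (x+y) * Real.log 2 := by
    have := jphi_two ((x+y)/2) (by linarith)
    rw [show 2*((x+y)/2) = x + y by ring] at this
    linarith
  have hE : jE x y = 2*(jphi x + jphi y - 2 * jphi ((x+y)/2)) := by
    rw [jE, jphi_two x hx, jphi_two y hy, h2]; ring
  rw [hE]
  have h3 : jphi ((x+y)/2) ≤ 1/2 * jphi x + 1/2 * jphi y := by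
    simp only [smul_eq_mul, jphi] at hc ⊢
    rw [show (x+y)/2 = 2⁻¹*x + 2⁻¹*y by ring]
    rw [show (2⁻¹:ℝ) = 1/2 by norm_num]; exact hc
  linarith

lemma jE_symm (x y : ℝ) : jE x y = jE y x := by
  simp only [jE, add_comm x y]; ring



lemma ofReal_setInt {a b : ℝ} (hab : a ≤ b) {f : ℝ → ℝ} (hf : ContinuousOn f (Icc a b))
    (hnn : ∀ t ∈ Ioc a b, 0 ≤ f t) :
    ∫⁻ t in Ioc a b, ENNReal.ofReal (f t) = ENNReal.ofReal (∫ t in a..b, f t) := by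
  rw [intervalIntegral.integral_of_le hab,
    ← MeasureTheory.ofReal_integral_eq_lintegral_ofReal]
  · exact (hf.integrableOn_Icc).mono_set Ioc_subset_Icc_self
  · rw [Filter.EventuallyLE, ae_restrict_iff' measurableSet_Ioc]
    exact Filter.Eventually.of_forall (fun t ht => hnn t ht)

lemma jF_nonneg {x y u : ℝ} (hxy : x ≤ y) (hu : 0 < u) : 0 ≤ jF x y u := by
  apply div_nonneg _ hu.le
  simp only [sub_nonneg, Real.exp_le_exp, neg_le_neg_iff]
  exact mul_le_mul_of_nonneg_right hxy hu.le

lemma jF_eq {x y u : ℝ} (hxy : x ≤ y) (hu : 0 < u) :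
    jF x y u = ∫ t in x..y, Real.exp (-(t*u)) := by
  have h : ∀ t ∈ uIcc x y, HasDerivAt (fun t => -(Real.exp (-(t*u)))/u) (Real.exp (-(t*u))) t := by
    intro t _
    have h1 : HasDerivAt (fun t : ℝ => -(t*u)) (-u) t := by
      simpa using ((hasDerivAt_id t).mul_const u).fun_neg
    have h2 := (Real.hasDerivAt_exp (-(t*u))).comp t h1
    have h3 := (h2.div_const u).fun_neg
    have hu' : u ≠ 0 := ne_of_gt hu
    simp only [Function.comp_def] at h3
    have e1 : (fun w:ℝ => -(Real.exp (-(w*u))/u)) = (fun w:ℝ => -(Real.exp (-(w*u)))/u) := by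
      funext w; ring
    have e2 : -(Real.exp (-(t*u)) * -u / u) = Real.exp (-(t*u)) := by field_simp
    rw [e1, e2] at h3
    exact h3
  rw [integral_eq_sub_of_hasDerivAt h (Continuous.intervalIntegrable (by fun_prop) _ _)]
  have hu' : u ≠ 0 := ne_of_gt hu
  simp only [jF]
  field_simp
  ring

-- main identity
lemma jL_eq {x y : ℝ} (hx : 0 < x) (hxy : x ≤ y) : jL x y = ENNReal.ofReal (jE x y) := by
  -- the triple-integrand
  have F : True := trivial
  have measF : Measurable (fun q : ℝ × ℝ × ℝ =>
      ENNReal.ofReal (Real.exp (-(q.2.1*q.1)) * Real.exp (-(q.2.2*q.1)))) := by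
    apply Measurable.ennreal_ofReal
    fun_prop
  -- step 1: rewrite jL as triple lintegral
  have step1 : jL x y = ∫⁻ u in Ioi 0, ∫⁻ s in Ioc x y, ∫⁻ t in Ioc x y, ENNReal.ofReal (Real.exp (-(s*u)) * Real.exp (-(t*u))) := by
    rw [jL]
    apply setLIntegral_congr_fun measurableSet_Ioi
    intro u hu
    dsimp only
    have hu : (0:ℝ) < u := hu
    have hof : ENNReal.ofReal (jF x y u) = ∫⁻ t in Ioc x y, ENNReal.ofReal (Real.exp (-(t*u))) := by
      rw [ofReal_setInt hxy (by fun_prop) (fun t _ => (Real.exp_pos _).le), ← jF_eq hxy hu]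
    have hfin : ∀ s : ℝ, (ENNReal.ofReal (Real.exp (-(s*u)))) ≠ ⊤ := fun s => ENNReal.ofReal_ne_top
    have hCne : (∫⁻ t in Ioc x y, ENNReal.ofReal (Real.exp (-(t*u)))) ≠ ⊤ := by
      rw [← hof]; exact ENNReal.ofReal_ne_top
    rw [show (2:ℝ) = ((2:ℕ):ℝ) by norm_num, ENNReal.rpow_natCast, pow_two, hof]
    rw [← MeasureTheory.lintegral_mul_const' _ _ hCne]
    refine lintegral_congr_ae (Filter.Eventually.of_forall (fun s => ?_))
    dsimp only
    rw [← MeasureTheory.lintegral_const_mul' _ _ (hfin s)]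
    refine lintegral_congr_ae (Filter.Eventually.of_forall (fun t => ?_))
    dsimp only
    rw [← ENNReal.ofReal_mul (Real.exp_pos _).le]
  -- step 2: swap integrals
  have meas2 : Measurable (fun q : ℝ × ℝ =>
      ∫⁻ t in Ioc x y, ENNReal.ofReal (Real.exp (-(q.2*q.1)) * Real.exp (-(t*q.1)))) := by
    have h : Measurable (fun p : (ℝ × ℝ) × ℝ =>
        ENNReal.ofReal (Real.exp (-(p.1.2*p.1.1)) * Real.exp (-(p.2*p.1.1)))) := by
      apply Measurable.ennreal_ofReal; fun_prop
    exact h.lintegral_prod_right'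
  have step2 : (∫⁻ u in Ioi (0:ℝ), ∫⁻ s in Ioc x y, ∫⁻ t in Ioc x y, ENNReal.ofReal (Real.exp (-(s*u)) * Real.exp (-(t*u))))
      = ∫⁻ s in Ioc x y, ∫⁻ t in Ioc x y, ∫⁻ u in Ioi 0, ENNReal.ofReal (Real.exp (-(s*u)) * Real.exp (-(t*u))) := by
    rw [lintegral_lintegral_swap meas2.aemeasurable]
    apply lintegral_congr_ae
    apply Filter.Eventually.of_forall
    intro s
    apply lintegral_lintegral_swap
    apply Measurable.aemeasurable
    have h : Measurable (fun p : ℝ × ℝ =>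
        ENNReal.ofReal (Real.exp (-(s*p.1)) * Real.exp (-(p.2*p.1)))) := by
      apply Measurable.ennreal_ofReal; fun_prop
    exact h

  -- step 3: compute innermost
  have step3 : (∫⁻ s in Ioc x y, ∫⁻ t in Ioc x y, ∫⁻ u in Ioi (0:ℝ), ENNReal.ofReal (Real.exp (-(s*u)) * Real.exp (-(t*u))))
      = ∫⁻ s in Ioc x y, ENNReal.ofReal (Real.log (s+y) - Real.log (s+x)) := by
    apply setLIntegral_congr_fun measurableSet_Ioc
    intro s hs
    dsimp only
    have hs0 : 0 < s := lt_of_le_of_lt hx.le hs.1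
    have inner : ∀ t ∈ Ioc x y, (∫⁻ u in Ioi (0:ℝ), ENNReal.ofReal (Real.exp (-(s*u)) * Real.exp (-(t*u)))) = ENNReal.ofReal ((s+t)⁻¹) := by
      intro t ht
      have ht0 : 0 < t := lt_of_le_of_lt hx.le ht.1
      have hst : 0 < s + t := by linarith
      have hcomb : ∀ u : ℝ, Real.exp (-(s*u)) * Real.exp (-(t*u)) = Real.exp (-((s+t)*u)) := by
        intro u; rw [← Real.exp_add]; ring_nf
      simp only [hcomb]
      have hint : ∫ u in Ioi (0:ℝ), Real.exp (-((s+t)*u)) = (s+t)⁻¹ := by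
        have := MeasureTheory.integral_comp_mul_left_Ioi (fun v => Real.exp (-v)) 0 hst
        simp only [mul_zero, smul_eq_mul] at this
        rw [this, integral_exp_neg_Ioi]
        simp
      rw [← hint, ← MeasureTheory.ofReal_integral_eq_lintegral_ofReal]
      · have h2 : IntegrableOn (fun u => Real.exp (-(s+t)*u)) (Ioi (0:ℝ)) volume :=
          exp_neg_integrableOn_Ioi 0 hst
        have e : (fun u => Real.exp (-(s+t)*u)) = (fun u => Real.exp (-((s+t)*u))) := by
          funext u; ring_nf
        rw [e] at h2
        exact h2
      · exact Filter.Eventually.of_forall (fun u => (Real.exp_pos _).le)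
    rw [setLIntegral_congr_fun measurableSet_Ioc inner]
    have hL2 : ∫ t in x..y, (s+t)⁻¹ = Real.log (s+y) - Real.log (s+x) := by
      have hpos : ∀ t ∈ uIcc x y, 0 < s + t := by
        intro t ht
        rw [uIcc_of_le hxy] at ht
        have := ht.1; linarith
      have h : ∀ t ∈ uIcc x y, HasDerivAt (fun t => Real.log (s+t)) ((s+t)⁻¹) t := by
        intro t ht
        have h1 : HasDerivAt (fun t : ℝ => s + t) 1 t := by
          simpa using (hasDerivAt_id t).const_add s
        have h2 := (Real.hasDerivAt_log (ne_of_gt (hpos t ht))).comp t h1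
        exact h2.congr_deriv (by simp)
      rw [integral_eq_sub_of_hasDerivAt h ?_]
      apply ContinuousOn.intervalIntegrable
      apply ContinuousOn.inv₀
      · fun_prop
      · intro t ht; exact ne_of_gt (hpos t ht)
    rw [ofReal_setInt hxy ?_ ?_, hL2]
    · apply ContinuousOn.inv₀
      · fun_prop
      · intro t ht
        have : 0 < s + t := by have := ht.1; linarith
        exact ne_of_gt this
    · intro t ht
      have ht0 : 0 < t := lt_of_le_of_lt hx.le ht.1
      positivity
  -- step 4: outer integral
  have step4 : (∫⁻ s in Ioc x y, ENNReal.ofReal (Real.log (s+y) - Real.log (s+x)))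
      = ENNReal.ofReal (jE x y) := by
    rw [ofReal_setInt hxy ?_ ?_]
    · congr 1
      -- L3
      have hmem : ∀ s ∈ uIcc x y, 0 < s + x ∧ 0 < s + y := by
        intro s hs
        rw [uIcc_of_le hxy] at hs
        constructor <;> nlinarith [hs.1]
      have h : ∀ s ∈ uIcc x y, HasDerivAt (fun s => jphi (s+y) - jphi (s+x))
          (Real.log (s+y) - Real.log (s+x)) s := by
        intro s hs
        have h1 : HasDerivAt (fun s : ℝ => s + y) 1 s := by simpa using (hasDerivAt_id s).add_const y
        have h2 : HasDerivAt (fun s : ℝ => s + x) 1 s := by simpa using (hasDerivAt_id s).add_const x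
        have h3 := (Real.hasDerivAt_mul_log (ne_of_gt (hmem s hs).2)).comp s h1
        have h4 := (Real.hasDerivAt_mul_log (ne_of_gt (hmem s hs).1)).comp s h2
        have h5 := h3.fun_sub h4
        simp only [Function.comp_def, mul_one] at h5
        refine h5.congr_deriv ?_
        ring
      rw [integral_eq_sub_of_hasDerivAt h ?_]
      · simp only [jphi, jE]
        rw [show y + y = 2*y by ring, show y + x = x + y by ring, show x + x = 2*x by ring]
        ring
      · apply ContinuousOn.intervalIntegrable
        apply ContinuousOn.sub <;>
        · apply ContinuousOn.log
          · fun_prop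
          · intro s hs; exact ne_of_gt (by first | exact (hmem s hs).2 | exact (hmem s hs).1)
    · apply ContinuousOn.sub
      · apply ContinuousOn.log
        · fun_prop
        · intro s hs
          exact ne_of_gt (by nlinarith [hs.1] : (0:ℝ) < s + y)
      · apply ContinuousOn.log
        · fun_prop
        · intro s hs
          exact ne_of_gt (by nlinarith [hs.1] : (0:ℝ) < s + x)
    · intro s hs
      have hs0 : 0 < s := lt_of_le_of_lt hx.le hs.1
      have h1 : 0 < s + x := by linarith
      have h2 : s + x ≤ s + y := by linarith
      have := Real.log_le_log h1 h2
      linarith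
  rw [step1, step2, step3, step4]




lemma jF_measurable (x y : ℝ) : Measurable (fun u => ENNReal.ofReal (jF x y u)) := by
  apply Measurable.ennreal_ofReal
  unfold jF
  fun_prop

lemma jL_mono {x x' y' y : ℝ} (h1 : x ≤ x') (h2 : x' ≤ y') (h3 : y' ≤ y) :
    jL x' y' ≤ jL x y := by
  unfold jL
  apply lintegral_mono_ae
  rw [ae_restrict_iff' measurableSet_Ioi]
  apply Filter.Eventually.of_forall
  intro u hu
  have hu : (0:ℝ) < u := hu
  apply ENNReal.rpow_le_rpow _ (by norm_num)
  apply ENNReal.ofReal_le_ofReal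
  unfold jF
  gcongr (?_ - ?_)/u <;> · apply Real.exp_le_exp.2; nlinarith

-- triangle for positives
lemma jtri_pos : ∀ {x y z : ℝ}, 0 < x → 0 < y → 0 < z →
    Real.sqrt (jE x z) ≤ Real.sqrt (jE x y) + Real.sqrt (jE y z) := by
  -- first the ordered Minkowski case
  have mink : ∀ {x y z : ℝ}, 0 < x → x ≤ y → y ≤ z →
      Real.sqrt (jE x z) ≤ Real.sqrt (jE x y) + Real.sqrt (jE y z) := by
    intro x y z hx hxy hyz
    have hy : 0 < y := lt_of_lt_of_le hx hxy
    have hz : 0 < z := lt_of_lt_of_le hy hyz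
    have hxz : x ≤ z := le_trans hxy hyz
    have hadd : ∀ u ∈ Ioi (0:ℝ), ENNReal.ofReal (jF x z u) ^ (2:ℝ)
        = ((fun u => ENNReal.ofReal (jF x y u)) + (fun u => ENNReal.ofReal (jF y z u))) u ^ (2:ℝ) := by
      intro u hu
      have hu : (0:ℝ) < u := hu
      have : jF x z u = jF x y u + jF y z u := by
        unfold jF; field_simp; ring
      rw [this, Pi.add_apply,
        ENNReal.ofReal_add (jF_nonneg hxy hu) (jF_nonneg hyz hu)]
    have hkey := ENNReal.lintegral_Lp_add_le (μ := volume.restrict (Ioi 0))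
      (jF_measurable x y).aemeasurable (jF_measurable y z).aemeasurable (by norm_num : (1:ℝ) ≤ 2)
    have hLxz : jL x z = ∫⁻ u in Ioi (0:ℝ),
        ((fun u => ENNReal.ofReal (jF x y u)) + (fun u => ENNReal.ofReal (jF y z u))) u ^ (2:ℝ) := by
      unfold jL
      exact setLIntegral_congr_fun measurableSet_Ioi hadd
    have h2 : (jL x z) ^ (1/2:ℝ) ≤ (jL x y) ^ (1/2:ℝ) + (jL y z) ^ (1/2:ℝ) := by
      rw [hLxz]
      exact hkey
    rw [jL_eq hx hxz, jL_eq hx hxy, jL_eq hy hyz] at h2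
    have cv : ∀ {a b : ℝ}, 0 ≤ a → 0 ≤ b →
        (ENNReal.ofReal (jE a b)) ^ (1/2:ℝ) = ENNReal.ofReal (Real.sqrt (jE a b)) := by
      intro a b ha hb
      rw [ENNReal.ofReal_rpow_of_nonneg (jE_nonneg ha hb) (by norm_num), Real.sqrt_eq_rpow]
    rw [cv hx.le hz.le, cv hx.le hy.le, cv hy.le hz.le,
      ← ENNReal.ofReal_add (Real.sqrt_nonneg _) (Real.sqrt_nonneg _)] at h2
    exact (ENNReal.ofReal_le_ofReal_iff (by positivity)).1 h2
  -- reduce the general case to the ordered case using monotonicity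
  have mono : ∀ {a b c : ℝ}, 0 < a → a ≤ b → b ≤ c → jE b c ≤ jE a c ∧ jE a b ≤ jE a c := by
    intro a b c ha hab hbc
    have hb : 0 < b := lt_of_lt_of_le ha hab
    have hac : a ≤ c := hab.trans hbc
    have h1 : jL b c ≤ jL a c := jL_mono hab hbc le_rfl
    have h2 : jL a b ≤ jL a c := jL_mono le_rfl hab hbc
    rw [jL_eq hb hbc, jL_eq ha hac, jL_eq ha hab] at *
    constructor
    · exact (ENNReal.ofReal_le_ofReal_iff (jE_nonneg ha.le (ha.le.trans hac))).1 h1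
    · exact (ENNReal.ofReal_le_ofReal_iff (jE_nonneg ha.le (ha.le.trans hac))).1 h2
  intro x y z hx hy hz
  -- wlog x ≤ z
  have main : ∀ {x z : ℝ}, 0 < x → 0 < z → x ≤ z →
      Real.sqrt (jE x z) ≤ Real.sqrt (jE x y) + Real.sqrt (jE y z) := by
    intro x z hx hz hxz
    rcases le_total y x with h | h
    · -- y ≤ x ≤ z : jE x z ≤ jE y z
      have := (mono hy h hxz).1
      calc Real.sqrt (jE x z) ≤ Real.sqrt (jE y z) := Real.sqrt_le_sqrt this
        _ ≤ Real.sqrt (jE x y) + Real.sqrt (jE y z) := by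
            have := Real.sqrt_nonneg (jE x y); linarith
    · rcases le_total z y with h' | h'
      · -- x ≤ z ≤ y : jE x z ≤ jE x y
        have := (mono hx hxz h').2
        calc Real.sqrt (jE x z) ≤ Real.sqrt (jE x y) := Real.sqrt_le_sqrt this
          _ ≤ Real.sqrt (jE x y) + Real.sqrt (jE y z) := by
              have := Real.sqrt_nonneg (jE y z); linarith
      · exact mink hx h h'
  rcases le_total x z with h | h
  · exact main hx hz h
  · have := main hz hx h
    rw [jE_symm z x, jE_symm z y, jE_symm y x] at this
    linarith




lemma jE_continuous : Continuous (fun v : ℝ × ℝ => jE v.1 v.2) := by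
  have h : Continuous (fun t : ℝ => t * Real.log t) := Real.continuous_mul_log
  unfold jE jphi
  exact ((h.comp (continuous_const.mul continuous_fst)).add
    (h.comp (continuous_const.mul continuous_snd))).sub
    (continuous_const.mul (h.comp (continuous_fst.add continuous_snd)))

lemma jtri {x y z : ℝ} (hx : 0 ≤ x) (hy : 0 ≤ y) (hz : 0 ≤ z) :
    Real.sqrt (jE x z) ≤ Real.sqrt (jE x y) + Real.sqrt (jE y z) := by
  have key : ∀ a b : ℝ, Tendsto (fun ε : ℝ => Real.sqrt (jE (a+ε) (b+ε))) (𝓝[>] 0)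
      (𝓝 (Real.sqrt (jE a b))) := by
    intro a b
    have hc : Continuous (fun ε : ℝ => Real.sqrt (jE (a+ε) (b+ε))) := by
      apply Real.continuous_sqrt.comp
      exact jE_continuous.comp
        ((continuous_const.add continuous_id).prodMk (continuous_const.add continuous_id))
    have := (hc.tendsto 0).mono_left (nhdsWithin_le_nhds (s := Ioi (0:ℝ)))
    simpa using this
  apply le_of_tendsto_of_tendsto (key x z) ((key x y).add (key y z))
  filter_upwards [self_mem_nhdsWithin] with ε hε
  exact jtri_pos (by simp at hε; linarith) (by simp at hε; linarith) (by simp at hε; linarith)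

-- per-coordinate identity for JSD terms
lemma jterm {p q : ℝ} (hp : 0 ≤ p) (hq : 0 ≤ q) :
    p * Real.log (p / ((p+q)/2)) + q * Real.log (q / ((p+q)/2)) = jE p q / 2 := by
  rcases eq_or_lt_of_le (by linarith : (0:ℝ) ≤ p + q) with h0 | h0
  · have hp0 : p = 0 := by linarith
    have hq0 : q = 0 := by linarith
    simp [hp0, hq0, jE, jphi]
  · set m := (p+q)/2 with hm
    have hm0 : 0 < m := by simp [hm]; linarith
    have key : ∀ a : ℝ, 0 ≤ a → a * Real.log (a / m) = jphi a - a * Real.log m := by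
      intro a ha
      rcases eq_or_lt_of_le ha with h | h
      · simp [← h, jphi]
      · rw [Real.log_div (ne_of_gt h) (ne_of_gt hm0), jphi]; ring
    rw [key p hp, key q hq]
    have e1 := jphi_two p hp
    have e2 := jphi_two q hq
    have e3 : jphi (p + q) = 2*m*Real.log 2 + 2 * jphi m := by
      rw [show p + q = 2*m by rw [hm]; ring]
      exact jphi_two m hm0.le
    have e4 : jphi m = m * Real.log m := rfl
    have : jE p q = jphi (2*p) + jphi (2*q) - 2 * jphi (p+q) := rfl
    rw [this, e1, e2, e3, e4, hm]
    ring


end JSDAux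

lemma JSD_eq {U : Type*} [Fintype U] (p q : U → ℝ) (hp : ∀ i, 0 ≤ p i) (hq : ∀ i, 0 ≤ q i) :
    JSD p q = (1/4) * ∑ i, jE (p i) (q i) := by
  unfold JSD KL
  rw [Finset.mul_sum, Finset.mul_sum, ← Finset.sum_add_distrib, Finset.mul_sum]
  apply Finset.sum_congr rfl
  intro i _
  have := jterm (hp i) (hq i)
  dsimp only
  linarith

lemma sqrt_sum_tri {U : Type*} [Fintype U] (p q r : U → ℝ)
    (hp : ∀ i, 0 ≤ p i) (hq : ∀ i, 0 ≤ q i) (hr : ∀ i, 0 ≤ r i) :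
    Real.sqrt (∑ i, jE (p i) (q i)) ≤
      Real.sqrt (∑ i, jE (p i) (r i)) + Real.sqrt (∑ i, jE (r i) (q i)) := by
  set v : EuclideanSpace ℝ U := WithLp.toLp 2 (fun i => Real.sqrt (jE (p i) (r i))) with hv
  set w : EuclideanSpace ℝ U := WithLp.toLp 2 (fun i => Real.sqrt (jE (r i) (q i))) with hw
  have hnv : ‖v‖ = Real.sqrt (∑ i, jE (p i) (r i)) := by
    rw [EuclideanSpace.norm_eq]
    congr 1
    apply Finset.sum_congr rfl
    intro i _
    rw [hv]
    simp only [PiLp.toLp_apply, Real.norm_eq_abs, sq_abs]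
    exact Real.sq_sqrt (jE_nonneg (hp i) (hr i))
  have hnw : ‖w‖ = Real.sqrt (∑ i, jE (r i) (q i)) := by
    rw [EuclideanSpace.norm_eq]
    congr 1
    apply Finset.sum_congr rfl
    intro i _
    rw [hw]
    simp only [PiLp.toLp_apply, Real.norm_eq_abs, sq_abs]
    exact Real.sq_sqrt (jE_nonneg (hr i) (hq i))
  have hstep : Real.sqrt (∑ i, jE (p i) (q i)) ≤ ‖v + w‖ := by
    have hsum : ∑ i, jE (p i) (q i) ≤ ∑ i, (v i + w i)^2 := by
      apply Finset.sum_le_sum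
      intro i _
      have htr := jtri (hp i) (hr i) (hq i)
      have h1 : jE (p i) (q i) = (Real.sqrt (jE (p i) (q i)))^2 :=
        (Real.sq_sqrt (jE_nonneg (hp i) (hq i))).symm
      rw [h1, hv, hw]
      apply pow_le_pow_left₀ (Real.sqrt_nonneg _) htr
    have hnorm : ‖v + w‖ = Real.sqrt (∑ i, (v i + w i)^2) := by
      rw [EuclideanSpace.norm_eq]
      congr 1
      apply Finset.sum_congr rfl
      intro i _
      simp only [PiLp.add_apply, Real.norm_eq_abs, sq_abs]
    rw [hnorm]
    exact Real.sqrt_le_sqrt hsum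
  calc Real.sqrt (∑ i, jE (p i) (q i)) ≤ ‖v + w‖ := hstep
    _ ≤ ‖v‖ + ‖w‖ := norm_add_le v w
    _ = _ := by rw [hnv, hnw]

/-- The square root of the Jensen–Shannon divergence satisfies the triangle inequality. -/
theorem sqrt_JSD_triangle {U : Type*} [Fintype U] (p q r : U → ℝ)
    (hp : IsPMF p) (hq : IsPMF q) (hr : IsPMF r) :
    Real.sqrt (JSD p q) ≤ Real.sqrt (JSD p r) + Real.sqrt (JSD r q) := by
  rw [JSD_eq p q hp.1 hq.1, JSD_eq p r hp.1 hr.1, JSD_eq r q hr.1 hq.1]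
  have key := sqrt_sum_tri p q r hp.1 hq.1 hr.1
  have hrw : ∀ s : ℝ, Real.sqrt ((1/4) * s) = (1/2) * Real.sqrt s := by
    intro s
    rw [Real.sqrt_mul (by norm_num : (0:ℝ) ≤ 1/4),
      show (1/4:ℝ) = (1/2)^2 by norm_num, Real.sqrt_sq (by norm_num : (0:ℝ) ≤ 1/2)]
  rw [hrw, hrw, hrw]
  linarith
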